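/- Let O and O′ be abelian categories with enough projectives, and let H and H′ be abelian categories. Let Z : O → H and Z′ : O′ → H′ be exact functors whose restrictions to the full subcategories of projective objects are fully faithful. Let E : O → O′ and F : O′ → O be exact functors mapping projective objects to projective objects, and assume F is left adjoint to E. Let E′ : H → H′ and F′ : H′ → H be functors equipped with natural isomorphisms Z′ ∘ E ≅ E′ ∘ Z and Z ∘ F ≅ F′ ∘ Z′. If E′ is left adjoint to F′, then E is left adjoint to F; together with the assumption F ⊣ E, the pair (E, F) is then biadjoint. -/

import Mathlib

open CategoryTheory CategoryTheory.Limits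

namespace AdjTransportAux

noncomputable section

variable {A : Type*} [Category A] [Abelian A] [EnoughProjectives A]
variable {B : Type*} [Category B] [Abelian B]
variable (G₁ G₂ : A ⥤ B) [G₁.Additive] [G₂.Additive] [PreservesFiniteLimits G₁]
  [PreservesFiniteColimits G₁]

/-- The standard two-step projective presentation of `X`, as a short complex. -/
def presCx (X : A) : ShortComplex A :=
  ShortComplex.mk (Projective.d (Projective.π X)) (Projective.π X) (by dsimp only [Projective.d]; exact (Category.assoc _ _ _).trans ((congrArg _ (kernel.condition _)).trans Limits.comp_zero))

lemma presCx_exact (X : A) : (presCx X).Exact := CategoryTheory.exact_d_f _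

lemma map_presCx_exact (X : A) : ((presCx X).map G₁).Exact := by
  haveI : G₁.PreservesHomology := { }
  exact (presCx_exact X).map G₁

variable {G₁ G₂}
variable (t : ∀ P : A, Projective P → (G₁.obj P ⟶ G₂.obj P))
  (ht : ∀ (P Q : A) (hP : Projective P) (hQ : Projective Q) (f : P ⟶ Q),
    t P hP ≫ G₂.map f = G₁.map f ≫ t Q hQ)

/-- The component at `X` of the extension of `t` to a natural transformation. -/
def extApp (X : A) : G₁.obj X ⟶ G₂.obj X := by
  haveI : Epi ((presCx X).map G₁).g := by
    dsimp [presCx, ShortComplex.map]; infer_instance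
  refine (map_presCx_exact G₁ X).desc
    (t (Projective.over X) inferInstance ≫ G₂.map (Projective.π X)) ?_
  dsimp [presCx, ShortComplex.map]
  rw [← Category.assoc, ← ht _ _ inferInstance inferInstance (Projective.d (Projective.π X)),
    Category.assoc, ← G₂.map_comp]
  exact (congrArg (t _ _ ≫ G₂.map ·) (presCx X).zero).trans (by rw [G₂.map_zero, Limits.comp_zero]; rfl)

lemma π_extApp (X : A) :
    G₁.map (Projective.π X) ≫ extApp t ht X
      = t (Projective.over X) inferInstance ≫ G₂.map (Projective.π X) := by
  haveI : Epi ((presCx X).map G₁).g := by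
    dsimp [presCx, ShortComplex.map]; infer_instance
  exact (map_presCx_exact G₁ X).g_desc _ _

lemma extApp_projective (X : A) (hX : Projective X) : extApp t ht X = t X hX := by
  haveI : Epi (G₁.map (Projective.π X)) := inferInstance
  rw [← cancel_epi (G₁.map (Projective.π X)), π_extApp,
    ht _ _ _ _ (Projective.π X)]

lemma extApp_natural {X Y : A} (f : X ⟶ Y) :
    G₁.map f ≫ extApp t ht Y = extApp t ht X ≫ G₂.map f := by
  haveI : Epi (G₁.map (Projective.π X)) := inferInstance
  rw [← cancel_epi (G₁.map (Projective.π X))]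
  have hg : Projective.factorThru (Projective.π X ≫ f) (Projective.π Y)
      ≫ Projective.π Y = Projective.π X ≫ f :=
    Projective.factorThru_comp _ _
  calc G₁.map (Projective.π X) ≫ G₁.map f ≫ extApp t ht Y
      = G₁.map (Projective.factorThru (Projective.π X ≫ f) (Projective.π Y))
          ≫ G₁.map (Projective.π Y) ≫ extApp t ht Y := by
        rw [← Category.assoc, ← G₁.map_comp, ← Category.assoc, ← G₁.map_comp, hg]
    _ = G₁.map (Projective.factorThru (Projective.π X ≫ f) (Projective.π Y))
          ≫ t (Projective.over Y) inferInstance ≫ G₂.map (Projective.π Y) := by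
        rw [π_extApp]
    _ = t (Projective.over X) inferInstance
          ≫ G₂.map (Projective.factorThru (Projective.π X ≫ f) (Projective.π Y))
          ≫ G₂.map (Projective.π Y) := by
        rw [← Category.assoc, ← ht, Category.assoc]
    _ = t (Projective.over X) inferInstance ≫ G₂.map (Projective.π X) ≫ G₂.map f := by
        rw [← G₂.map_comp, hg, G₂.map_comp]
    _ = G₁.map (Projective.π X) ≫ extApp t ht X ≫ G₂.map f := by
        simp only [← Category.assoc]
        rw [π_extApp]

/-- The extension of `t` to a natural transformation `G₁ ⟶ G₂`. -/
def extNatTrans : G₁ ⟶ G₂ where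
  app X := extApp t ht X
  naturality _ _ f := extApp_natural t ht f

@[simp] lemma extNatTrans_app (X : A) : (extNatTrans t ht).app X = extApp t ht X := rfl

end

end AdjTransportAux

open AdjTransportAux


/-- Let `O` and `O'` be abelian categories with enough projectives and
`H`, `H'` abelian categories.  Let `Z : O ⥤ H` and `Z' : O' ⥤ H'` be exact functors
whose restrictions to projective objects are fully faithful.  Let `E : O ⥤ O'` and
`F : O' ⥤ O` be exact functors mapping projectives to projectives, with `F` left adjoint
to `E`.  Let `E' : H ⥤ H'`, `F' : H' ⥤ H` be functors equipped with natural isomorphisms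
`Z' ∘ E ≅ E' ∘ Z` and `Z ∘ F ≅ F' ∘ Z'`.  If `E'` is left adjoint to `F'`, then `E` is
left adjoint to `F` (so, together with the assumption `F ⊣ E`, the pair `(E, F)` is
biadjoint). -/
theorem adjunction_transport
    {O : Type*} [Category O] [Abelian O] [EnoughProjectives O]
    {O' : Type*} [Category O'] [Abelian O'] [EnoughProjectives O']
    {H : Type*} [Category H] [Abelian H]
    {H' : Type*} [Category H'] [Abelian H']
    (Z : O ⥤ H) [Z.Additive] [PreservesFiniteLimits Z] [PreservesFiniteColimits Z]
    (Z' : O' ⥤ H') [Z'.Additive] [PreservesFiniteLimits Z'] [PreservesFiniteColimits Z']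
    (hZ : ∀ P Q : O, Projective P → Projective Q →
      Function.Bijective (fun f : P ⟶ Q => Z.map f))
    (hZ' : ∀ P Q : O', Projective P → Projective Q →
      Function.Bijective (fun f : P ⟶ Q => Z'.map f))
    (E : O ⥤ O') [E.Additive] [PreservesFiniteLimits E] [PreservesFiniteColimits E]
    (F : O' ⥤ O) [F.Additive] [PreservesFiniteLimits F] [PreservesFiniteColimits F]
    (hE : ∀ X : O, Projective X → Projective (E.obj X))
    (hF : ∀ X : O', Projective X → Projective (F.obj X))
    (adjFE : F ⊣ E)
    (E' : H ⥤ H') (F' : H' ⥤ H)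
    (isoE : E ⋙ Z' ≅ Z ⋙ E') (isoF : F ⋙ Z ≅ Z' ⋙ F')
    (adjE'F' : E' ⊣ F') :
    Nonempty (E ⊣ F) := by
  -- Choose unit and counit components on projective objects, characterized by their
  -- images under `Z` resp. `Z'`.
  choose tU htU using fun (P : O) (hP : Projective P) =>
    (hZ P (F.obj (E.obj P)) hP (hF _ (hE _ hP))).2
      (adjE'F'.unit.app (Z.obj P) ≫ F'.map (isoE.inv.app P) ≫ isoF.inv.app (E.obj P))
  choose tC htC using fun (Q : O') (hQ : Projective Q) =>
    (hZ' (E.obj (F.obj Q)) Q (hE _ (hF _ hQ)) hQ).2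
      (isoE.hom.app (F.obj Q) ≫ E'.map (isoF.hom.app Q) ≫ adjE'F'.counit.app (Z'.obj Q))
  have htU' : ∀ (P : O) (hP : Projective P), Z.map (tU P hP)
      = adjE'F'.unit.app (Z.obj P) ≫ F'.map (isoE.inv.app P) ≫ isoF.inv.app (E.obj P) := htU
  have htC' : ∀ (Q : O') (hQ : Projective Q), Z'.map (tC Q hQ)
      = isoE.hom.app (F.obj Q) ≫ E'.map (isoF.hom.app Q)
          ≫ adjE'F'.counit.app (Z'.obj Q) := htC
  -- Naturality of the unit components on projectives.
  have htUnat : ∀ (P Q : O) (hP : Projective P) (hQ : Projective Q) (f : P ⟶ Q),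
      tU P hP ≫ (E ⋙ F).map f = (𝟭 O).map f ≫ tU Q hQ := by
    intro P Q hP hQ f
    apply (hZ P ((E ⋙ F).obj Q) hP (hF _ (hE _ hQ))).1
    show Z.map _ = Z.map _
    have h1 : isoF.inv.app (E.obj P) ≫ Z.map (F.map (E.map f))
        = F'.map (Z'.map (E.map f)) ≫ isoF.inv.app (E.obj Q) := by
      simpa using (isoF.inv.naturality (E.map f)).symm
    have h2 : F'.map (isoE.inv.app P) ≫ F'.map (Z'.map (E.map f))
        = F'.map (E'.map (Z.map f)) ≫ F'.map (isoE.inv.app Q) := by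
      rw [← F'.map_comp, ← F'.map_comp]
      congr 1
      simpa using (isoE.inv.naturality f).symm
    have h3 : Z.map f ≫ adjE'F'.unit.app (Z.obj Q)
        = adjE'F'.unit.app (Z.obj P) ≫ F'.map (E'.map (Z.map f)) := by
      simpa using adjE'F'.unit.naturality (Z.map f)
    rw [Z.map_comp, Z.map_comp]
    simp only [Functor.comp_obj, Functor.id_obj, Functor.comp_map, Functor.id_map]
    rw [htU', htU']
    simp only [Category.assoc]
    rw [h1, reassoc_of% h2, ← reassoc_of% h3]
  -- Naturality of the counit components on projectives.
  have htCnat : ∀ (P Q : O') (hP : Projective P) (hQ : Projective Q) (f : P ⟶ Q),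
      tC P hP ≫ (𝟭 O').map f = (F ⋙ E).map f ≫ tC Q hQ := by
    intro P Q hP hQ f
    apply (hZ' ((F ⋙ E).obj P) Q (hE _ (hF _ hP)) hQ).1
    show Z'.map _ = Z'.map _
    have k1 : Z'.map (E.map (F.map f)) ≫ isoE.hom.app (F.obj Q)
        = isoE.hom.app (F.obj P) ≫ E'.map (Z.map (F.map f)) := by
      simpa using isoE.hom.naturality (F.map f)
    have k2 : E'.map (Z.map (F.map f)) ≫ E'.map (isoF.hom.app Q)
        = E'.map (isoF.hom.app P) ≫ E'.map (F'.map (Z'.map f)) := by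
      rw [← E'.map_comp, ← E'.map_comp]
      congr 1
      simpa using isoF.hom.naturality f
    have k3 : E'.map (F'.map (Z'.map f)) ≫ adjE'F'.counit.app (Z'.obj Q)
        = adjE'F'.counit.app (Z'.obj P) ≫ Z'.map f := by
      simpa using adjE'F'.counit.naturality (Z'.map f)
    rw [Z'.map_comp, Z'.map_comp]
    simp only [Functor.comp_obj, Functor.id_obj, Functor.comp_map, Functor.id_map]
    rw [htC', htC']
    simp only [Category.assoc]
    rw [reassoc_of% k1, reassoc_of% k2, k3]
  -- Instances needed to extend from projectives.
  haveI : PreservesFiniteLimits (𝟭 O) := ⟨fun _ _ _ => inferInstance⟩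
  haveI : PreservesFiniteColimits (𝟭 O) := ⟨fun _ _ _ => inferInstance⟩
  haveI : PreservesFiniteLimits (F ⋙ E) := comp_preservesFiniteLimits F E
  haveI : PreservesFiniteColimits (F ⋙ E) := comp_preservesFiniteColimits F E
  -- The triangle identities on projective objects.
  have tri1proj : ∀ (P : O) (hP : Projective P),
      E.map (tU P hP) ≫ tC (E.obj P) (hE P hP) = 𝟙 (E.obj P) := by
    intro P hP
    apply (hZ' (E.obj P) (E.obj P) (hE P hP) (hE P hP)).1
    show Z'.map _ = Z'.map _
    rw [Z'.map_comp, htC', Z'.map_id]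
    have n1 : Z'.map (E.map (tU P hP)) ≫ isoE.hom.app (F.obj (E.obj P))
        = isoE.hom.app P ≫ E'.map (Z.map (tU P hP)) := by
      simpa using isoE.hom.naturality (tU P hP)
    have n2 : E'.map (Z.map (tU P hP)) ≫ E'.map (isoF.hom.app (E.obj P))
        = E'.map (adjE'F'.unit.app (Z.obj P)) ≫ E'.map (F'.map (isoE.inv.app P)) := by
      rw [← E'.map_comp, ← E'.map_comp, htU']
      congr 1
      simp
    have n3 : E'.map (F'.map (isoE.inv.app P)) ≫ adjE'F'.counit.app (Z'.obj (E.obj P))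
        = adjE'F'.counit.app (E'.obj (Z.obj P)) ≫ isoE.inv.app P := by
      simpa using adjE'F'.counit.naturality (isoE.inv.app P)
    rw [reassoc_of% n1, reassoc_of% n2, n3]
    simp
  have tri2proj : ∀ (Q : O') (hQ : Projective Q),
      tU (F.obj Q) (hF Q hQ) ≫ F.map (tC Q hQ) = 𝟙 (F.obj Q) := by
    intro Q hQ
    apply (hZ (F.obj Q) (F.obj Q) (hF Q hQ) (hF Q hQ)).1
    show Z.map _ = Z.map _
    rw [Z.map_comp, htU', Z.map_id]
    have m1 : Z.map (F.map (tC Q hQ)) ≫ isoF.hom.app Q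
        = isoF.hom.app (E.obj (F.obj Q)) ≫ F'.map (Z'.map (tC Q hQ)) := by
      simpa using isoF.hom.naturality (tC Q hQ)
    have m1' : Z.map (F.map (tC Q hQ))
        = isoF.hom.app (E.obj (F.obj Q)) ≫ F'.map (Z'.map (tC Q hQ)) ≫ isoF.inv.app Q := by
      rw [← Category.assoc, ← m1]
      simp
    rw [m1', htC']
    have q1 : F'.map (isoE.inv.app (F.obj Q)) ≫ F'.map (isoE.hom.app (F.obj Q))
        = 𝟙 (F'.obj (E'.obj (Z.obj (F.obj Q)))) := by
      rw [← F'.map_comp]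
      simp
    have q2 : adjE'F'.unit.app (Z.obj (F.obj Q)) ≫ F'.map (E'.map (isoF.hom.app Q))
        = isoF.hom.app Q ≫ adjE'F'.unit.app (F'.obj (Z'.obj Q)) := by
      simpa using (adjE'F'.unit.naturality (isoF.hom.app Q)).symm
    simp only [Functor.map_comp, Category.assoc, Iso.inv_hom_id_app_assoc]
    rw [reassoc_of% q1, reassoc_of% q2]
    simp
  -- Extend unit and counit to all objects.
  obtain ⟨η, ηnat, ηproj⟩ : ∃ η : ∀ X : O, X ⟶ F.obj (E.obj X),
      (∀ (X Y : O) (f : X ⟶ Y), f ≫ η Y = η X ≫ F.map (E.map f)) ∧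
      (∀ (P : O) (hP : Projective P), η P = tU P hP) := by
    refine ⟨fun X => extApp (G₁ := 𝟭 O) (G₂ := E ⋙ F) tU htUnat X,
      fun X Y f => ?_, fun P hP => ?_⟩
    · simpa using extApp_natural (G₁ := 𝟭 O) (G₂ := E ⋙ F) tU htUnat f
    · simpa using extApp_projective (G₁ := 𝟭 O) (G₂ := E ⋙ F) tU htUnat P hP
  obtain ⟨ε, εnat, εproj⟩ : ∃ ε : ∀ Y : O', E.obj (F.obj Y) ⟶ Y,
      (∀ (X Y : O') (f : X ⟶ Y), E.map (F.map f) ≫ ε Y = ε X ≫ f) ∧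
      (∀ (Q : O') (hQ : Projective Q), ε Q = tC Q hQ) := by
    refine ⟨fun Y => extApp (G₁ := F ⋙ E) (G₂ := 𝟭 O') tC htCnat Y,
      fun X Y f => ?_, fun Q hQ => ?_⟩
    · simpa using extApp_natural (G₁ := F ⋙ E) (G₂ := 𝟭 O') tC htCnat f
    · simpa using extApp_projective (G₁ := F ⋙ E) (G₂ := 𝟭 O') tC htCnat Q hQ
  -- Assemble the adjunction.
  refine Nonempty.intro
    { unit :=
        { app := η
          naturality := fun X Y f => by simpa using ηnat X Y f }
      counit :=
        { app := ε
          naturality := fun X Y f => by simpa using εnat X Y f }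
      left_triangle_components := fun X => by
        haveI : Epi (E.map (Projective.π X)) := inferInstance
        show E.map (η X) ≫ ε (E.obj X) = 𝟙 (E.obj X)
        rw [← cancel_epi (E.map (Projective.π X))]
        calc E.map (Projective.π X) ≫ E.map (η X) ≫ ε (E.obj X)
            = E.map (Projective.π X ≫ η X) ≫ ε (E.obj X) := by
              rw [E.map_comp, Category.assoc]
          _ = E.map (η (Projective.over X))
                ≫ E.map (F.map (E.map (Projective.π X))) ≫ ε (E.obj X) := by
              rw [ηnat _ _ (Projective.π X), E.map_comp, Category.assoc]
          _ = E.map (η (Projective.over X))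
                ≫ ε (E.obj (Projective.over X)) ≫ E.map (Projective.π X) := by
              rw [εnat _ _ (E.map (Projective.π X))]
          _ = E.map (Projective.π X) ≫ 𝟙 (E.obj X) := by
              rw [ηproj _ inferInstance, εproj _ (hE _ inferInstance),
                reassoc_of% (tri1proj (Projective.over X) inferInstance), Category.comp_id]
      right_triangle_components := fun Y => by
        haveI : Epi (F.map (Projective.π Y)) := inferInstance
        show η (F.obj Y) ≫ F.map (ε Y) = 𝟙 (F.obj Y)
        rw [← cancel_epi (F.map (Projective.π Y))]
        calc F.map (Projective.π Y) ≫ η (F.obj Y) ≫ F.map (ε Y)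
            = (F.map (Projective.π Y) ≫ η (F.obj Y)) ≫ F.map (ε Y) := by
              rw [Category.assoc]
          _ = η (F.obj (Projective.over Y))
                ≫ F.map (E.map (F.map (Projective.π Y))) ≫ F.map (ε Y) := by
              rw [ηnat _ _ (F.map (Projective.π Y)), Category.assoc]
          _ = η (F.obj (Projective.over Y))
                ≫ F.map (ε (Projective.over Y)) ≫ F.map (Projective.π Y) := by
              rw [← F.map_comp, εnat _ _ (Projective.π Y), F.map_comp]
          _ = F.map (Projective.π Y) ≫ 𝟙 (F.obj Y) := by
              rw [ηproj _ (hF _ inferInstance), εproj _ inferInstance,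
                reassoc_of% (tri2proj (Projective.over Y) inferInstance), Category.comp_id]
    }
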